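/- Let M be a complex normed space, let L : M → M be a bounded linear map with ‖L‖ ≤ 1, and let (N, α, E) be a nondegenerate reversible lift of L. Define θ : N → S_L by θ(y) = (E(α^{-n}(y)))_{n∈ℤ}. Then θ is well defined (for each y ∈ N, the sequence (E(α^{-n}(y)))_{n∈ℤ} is a bounded inverse sequence for L), θ is an injective linear map with ‖θ(y)‖ ≤ ‖y‖ for all y ∈ N, and θ satisfies θ ∘ α = σ ∘ θ and E₀ ∘ θ = E. -/
import Mathlib


/-- The space `S_L` of inverse sequences of a map `L : M → M`: norm-bounded bilateral
sequences `(x_n)_{n ∈ ℤ}` with `x_n = L (x_{n+1})` for all `n`; it carries the supremum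
norm. -/
def invSeqSet {M : Type*} [Norm M] (L : M → M) : Set (ℤ → M) :=
  {x | BddAbove (Set.range fun n => ‖x n‖) ∧ ∀ n : ℤ, x n = L (x (n + 1))}

/-- The shift `σ((x_n)_{n ∈ ℤ}) = (x_{n-1})_{n ∈ ℤ}` on bilateral sequences. -/
def shiftSeq {M : Type*} (x : ℤ → M) : ℤ → M := fun n => x (n - 1)

/-- The comparison map `θ(y) = (E(α^{-n}(y)))_{n ∈ ℤ}` from `N` into bilateral
sequences. -/
def liftTheta {M N : Type*} [NormedAddCommGroup N] [NormedSpace ℂ N]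
    (E : N → M) (α : N ≃ₗᵢ[ℂ] N) : N → ℤ → M :=
  fun y n => E ((α ^ (-n)) y)

/-- Let `M` be a complex normed space, `L : M → M` bounded linear
with `‖L‖ ≤ 1`, and `(N, α, E)` a nondegenerate reversible lift of `L`.  Define
`θ : N → S_L` by `θ(y) = (E(α^{-n}(y)))_{n ∈ ℤ}`.  Then `θ` is well defined (each
`θ(y)` is a bounded inverse sequence for `L`), `θ` is an injective linear map with
`‖θ(y)‖ ≤ ‖y‖` (supremum norm), and `θ ∘ α = σ ∘ θ`, `E₀ ∘ θ = E`. -/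
theorem stmt17 {M N : Type*} [NormedAddCommGroup M] [NormedSpace ℂ M]
    [NormedAddCommGroup N] [NormedSpace ℂ N]
    (L : M →L[ℂ] M) (hL : ‖L‖ ≤ 1)
    (α : N ≃ₗᵢ[ℂ] N) (E : N →L[ℂ] M) (hE : ‖E‖ ≤ 1)
    (hEq : ∀ y : N, E (α y) = L (E y))
    (hnd : ∀ y : N, (∀ n : ℕ, E ((α ^ (-(n : ℤ))) y) = 0) → y = 0) :
    -- θ is well defined into S_L
    (∀ y : N, liftTheta (⇑E) α y ∈ invSeqSet L) ∧
    -- θ is linear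
    (∀ y z : N, liftTheta (⇑E) α (y + z) = liftTheta (⇑E) α y + liftTheta (⇑E) α z) ∧
    (∀ (c : ℂ) (y : N), liftTheta (⇑E) α (c • y) = c • liftTheta (⇑E) α y) ∧
    -- θ is injective
    Function.Injective (liftTheta (⇑E) α) ∧
    -- θ is contractive for the supremum norm
    (∀ y : N, (⨆ n : ℤ, ‖liftTheta (⇑E) α y n‖) ≤ ‖y‖) ∧
    -- θ ∘ α = σ ∘ θ and E₀ ∘ θ = E
    (∀ y : N, liftTheta (⇑E) α (α y) = shiftSeq (liftTheta (⇑E) α y)) ∧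
    (∀ y : N, liftTheta (⇑E) α y 0 = E y) := by
  have hnorm : ∀ (k : ℤ) (y : N), ‖(α ^ k) y‖ = ‖y‖ := fun k y => (α ^ k).norm_map y
  have hEb : ∀ z : N, ‖E z‖ ≤ ‖z‖ := fun z =>
    (E.le_opNorm z).trans (by nlinarith [norm_nonneg z])
  have hadd : ∀ (a b : ℤ) (y : N), (α ^ (a + b)) y = (α ^ a) ((α ^ b) y) := by
    intro a b y; rw [zpow_add]; rfl
  have hbd : ∀ (y : N) (n : ℤ), ‖liftTheta (⇑E) α y n‖ ≤ ‖y‖ := by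
    intro y n
    calc ‖E ((α ^ (-n)) y)‖ ≤ ‖(α ^ (-n)) y‖ := hEb _
      _ = ‖y‖ := hnorm _ _
  have hsub : ∀ y z : N, liftTheta (⇑E) α (y - z) = liftTheta (⇑E) α y - liftTheta (⇑E) α z := by
    intro y z; funext n
    simp [liftTheta, map_sub]
  refine ⟨?_, ?_, ?_, ?_, ?_, ?_, ?_⟩
  · intro y
    constructor
    · exact ⟨‖y‖, by rintro _ ⟨n, rfl⟩; exact hbd y n⟩
    · intro n
      have h1 : (α ^ (-n)) y = α ((α ^ (-(n + 1))) y) := by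
        have := hadd 1 (-(n + 1)) y
        rw [show (1 : ℤ) + -(n + 1) = -n by ring] at this
        rw [this, zpow_one]
      simp only [liftTheta, h1, hEq]
  · intro y z; funext n; simp [liftTheta, map_add]
  · intro c y; funext n; simp [liftTheta, map_smul]
  · intro y z h
    have h0 : y - z = 0 := by
      apply hnd
      intro n
      have : liftTheta (⇑E) α (y - z) (n : ℤ) = 0 := by
        rw [hsub, h]; simp
      simpa [liftTheta] using this
    exact sub_eq_zero.mp h0
  · intro y; exact ciSup_le (hbd y)
  · intro y; funext n
    simp only [liftTheta, shiftSeq]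
    have := hadd (-n) 1 y
    rw [show (-n : ℤ) + 1 = -(n - 1) by ring, zpow_one] at this
    rw [this]
  · intro y; simp [liftTheta]
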